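/- Fix an outcome ω ∈ X and infinite geodesics g_1 ≺ g_2 in T_0 eventually moving into H_i; let U denote the region between g_1 and g_2 in H_i. For each y ∈ Z^2, if Geo(0,y) contains a vertex z lying strictly in U (i.e., z ∈ U \ (g_1 ∪ g_2)), then Geo(0,y) ⊆ U ∪ g_1 ∪ g_2, and moreover all vertices of Geo(0,y) from z onward lie in U \ (g_1 ∪ g_2). -/

import Mathlib

open MeasureTheory Filter Topology
open scoped ENNReal NNReal

noncomputable section

/-! ## The planar lattice -/

/-- Vertices of the planar square lattice. -/
abbrev V : Type := ℤ × ℤ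

/-- The step corresponding to an edge direction: `true` ↦ horizontal, `false` ↦ vertical. -/
def dirStep : Bool → V
  | true => (1, 0)
  | false => (0, 1)

/-- Undirected nearest-neighbour edges of `ℤ²`, encoded by their lower endpoint together with
a direction. -/
abbrev Edge : Type := V × Bool

/-- The space of nonnegative edge-weight configurations, `Ω₁ = [0,∞)^{E²}`. -/
abbrev Omega1 : Type := Edge → ℝ≥0

/-- Configurations of directed nearest-neighbour edges, `Ω₂ = {0,1}^{directed edges}`. -/
abbrev Omega2 : Type := V → V → Bool

/-- Classical conversion of a proposition to a Boolean. -/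
def pbool (p : Prop) : Bool := @decide p (Classical.propDecidable p)

/-- The weight of the (undirected) edge between `x` and `y` (zero if not adjacent),
`ℝ≥0`-valued. -/
def wtN (ω : Omega1) (x y : V) : ℝ≥0 :=
  if y = x + dirStep true then ω (x, true)
  else if y = x + dirStep false then ω (x, false)
  else if x = y + dirStep true then ω (y, true)
  else if x = y + dirStep false then ω (y, false)
  else 0

/-- The weight of the edge between `x` and `y`, real-valued. -/
def wt (ω : Omega1) (x y : V) : ℝ := (wtN ω x y : ℝ)

/-- Nearest-neighbour adjacency in `ℤ²`. -/
def Adj (x y : V) : Prop :=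
  y = x + dirStep true ∨ y = x + dirStep false ∨
    x = y + dirStep true ∨ x = y + dirStep false

/-! ## Paths, passage times and geodesics -/

/-- `l` is a (finite) nearest-neighbour lattice path from `x` to `y`. -/
def IsPathFromTo (l : List V) (x y : V) : Prop :=
  l ≠ [] ∧ l.Chain' Adj ∧ l.head? = some x ∧ l.getLast? = some y

/-- The passage time `T(π) = Σ_{e∈π} ω_e` of a finite path. -/
def pathTime (ω : Omega1) : List V → ℝ
  | x :: y :: r => wt ω x y + pathTime ω (y :: r)
  | _ => 0

/-- The first-passage time `T(x,y)`: the infimum of passage times of lattice paths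
from `x` to `y`. -/
def Tdist (ω : Omega1) (x y : V) : ℝ :=
  sInf {t : ℝ | ∃ l : List V, IsPathFromTo l x y ∧ pathTime ω l = t}

/-- `l` is a geodesic from `x` to `y`. -/
def IsGeo (ω : Omega1) (l : List V) (x y : V) : Prop :=
  IsPathFromTo l x y ∧ pathTime ω l = Tdist ω x y

/-- An infinite nearest-neighbour path. -/
def IsInfPath (γ : ℕ → V) : Prop := ∀ n, Adj (γ n) (γ (n + 1))

/-- The initial segment `(γ 0, …, γ n)` of an infinite path, as a list. -/
def segList (γ : ℕ → V) (n : ℕ) : List V := (List.range (n + 1)).map γ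

/-- `γ` is an infinite geodesic: every finite initial segment is a geodesic. -/
def IsInfGeo (ω : Omega1) (γ : ℕ → V) : Prop :=
  IsInfPath γ ∧ ∀ n, IsGeo ω (segList γ n) (γ 0) (γ n)

/-- `x ∈ 𝒯_v`: the vertex `x` lies on some infinite geodesic starting at `v`. -/
def InTree (ω : Omega1) (v x : V) : Prop :=
  ∃ γ : ℕ → V, IsInfGeo ω γ ∧ γ 0 = v ∧ ∃ n, γ n = x

/-- Two infinite paths coalesce: they have equal terminal segments. -/
def Coalesce (γ γ' : ℕ → V) : Prop := ∃ i j : ℕ, ∀ n, γ (i + n) = γ' (j + n)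

/-- The Busemann function `B_g(y,z) = lim_k [T(y,g_k) - T(z,g_k)]` of an infinite geodesic
(defined via `limsup`, which agrees with the limit whenever the latter exists). -/
def busemann (ω : Omega1) (γ : ℕ → V) (y z : V) : ℝ :=
  Filter.limsup (fun k => Tdist ω y (γ k) - Tdist ω z (γ k)) Filter.atTop

/-! ## Euclidean geometry of the plane -/

/-- The embedding `ℤ² → ℝ²`. -/
def toR2 (x : V) : ℝ × ℝ := ((x.1 : ℝ), (x.2 : ℝ))

/-- The Euclidean norm of a lattice point. -/
def nrm (x : V) : ℝ := Real.sqrt ((x.1 : ℝ) ^ 2 + (x.2 : ℝ) ^ 2)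

/-- The Euclidean norm on `ℝ²`. -/
def nrm2 (x : ℝ × ℝ) : ℝ := Real.sqrt (x.1 ^ 2 + x.2 ^ 2)

/-- The Euclidean inner product on `ℝ²` (a linear functional identified with its gradient). -/
def dotp (ρ x : ℝ × ℝ) : ℝ := ρ.1 * x.1 + ρ.2 * x.2

/-- The translate `w + H` of a subset of the plane. -/
def trSet (w : ℝ × ℝ) (H : Set (ℝ × ℝ)) : Set (ℝ × ℝ) := {x | x - w ∈ H}

/-- The box `[-L,L]² ⊆ ℝ²`. -/
def boxR (L : ℝ) : Set (ℝ × ℝ) := {x | |x.1| ≤ L ∧ |x.2| ≤ L}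

/-- Minkowski sum of two subsets of the plane. -/
def msum (A B : Set (ℝ × ℝ)) : Set (ℝ × ℝ) := {x | ∃ a ∈ A, ∃ b ∈ B, x = a + b}

/-- The open half-plane `H_i = {x : (cos(iπ/4), sin(iπ/4))·x > 0}` (indexed mod 8). -/
def Hp (i : ℤ) : Set (ℝ × ℝ) :=
  {x | 0 < Real.cos (i * Real.pi / 4) * x.1 + Real.sin (i * Real.pi / 4) * x.2}

/-- `H_i + [-L,L]²` (Minkowski sum). -/
def msumHL (i : ℤ) (L : ℝ) : Set (ℝ × ℝ) := msum (Hp i) (boxR L)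

/-- The Busemann function of `γ` is asymptotically linear to the functional `ρ`:
`|B_γ(0,z) - ρ·z| / |z| → 0` as `|z| → ∞`. -/
def AsympLinear (ω : Omega1) (γ : ℕ → V) (ρ : ℝ × ℝ) : Prop :=
  Tendsto (fun z : V => |busemann ω γ 0 z - dotp ρ (toR2 z)| / nrm z)
    (comap nrm atTop) (𝓝 0)

/-- `Dir(γ)`: the set of limit points of `γ n / |γ n|` on the unit circle. -/
def DirSet (γ : ℕ → V) : Set (ℝ × ℝ) :=
  {x | nrm2 x = 1 ∧ MapClusterPt x atTop fun n => (nrm (γ n))⁻¹ • toR2 (γ n)}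

/-- `Arc(ρ) = {x ∈ S¹ : ρ·x = μ(x)}`. -/
def arcSet (mu : ℝ × ℝ → ℝ) (ρ : ℝ × ℝ) : Set (ℝ × ℝ) :=
  {x | nrm2 x = 1 ∧ dotp ρ x = mu x}

/-- `mu` is a norm on `ℝ²`. -/
def IsNorm2 (mu : ℝ × ℝ → ℝ) : Prop :=
  (∀ x y, mu (x + y) ≤ mu x + mu y) ∧ (∀ (c : ℝ) (x), mu (c • x) = |c| * mu x) ∧
    (∀ x, 0 ≤ mu x) ∧ ∀ x, mu x = 0 → x = 0

/-- `{x : ρ·x = 1}` is a supporting line of the unit ball `{μ ≤ 1}`. -/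
def IsSupporting (mu : ℝ × ℝ → ℝ) (ρ : ℝ × ℝ) : Prop :=
  (∀ x, mu x ≤ 1 → dotp ρ x ≤ 1) ∧ ∃ x, mu x = 1 ∧ dotp ρ x = 1

/-- `{x : ρ·x = 1}` is a supporting line of `{μ ≤ 1}` passing through the point `p`. -/
def IsSupportingAt (mu : ℝ × ℝ → ℝ) (ρ : ℝ × ℝ) (p : ℝ × ℝ) : Prop :=
  (∀ x, mu x ≤ 1 → dotp ρ x ≤ 1) ∧ dotp ρ p = 1

/-! ## Translations and lattice symmetries -/

/-- The translation `σ_z` acting on weight configurations: `(σ_z ω)_e = ω_{e-z}`. -/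
def shiftW (z : V) (ω : Omega1) : Omega1 := fun e => ω (e.1 - z, e.2)

/-- The pull-back of a weight configuration along a map of the lattice. -/
def pullbackW (g : V → V) (ω : Omega1) : Omega1 :=
  fun e => wtN ω (g e.1) (g (e.1 + dirStep e.2))

/-- A bijection of `ℤ²` preserving adjacency (these are exactly the compositions of
translations and the point symmetries of `ℤ²`). -/
def AdjAuto (g : V ≃ V) : Prop := ∀ x y, Adj x y ↔ Adj (g x) (g y)

/-- The translation `σ_z` acting on directed-edge configurations. -/
def shiftC (z : V) (η : Omega2) : Omega2 := fun x y => η (x - z) (y - z)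

/-- The translation `σ_z` acting on `Ω₁ × Ω₂`. -/
def sigmaZ (z : V) (p : Omega1 × Omega2) : Omega1 × Omega2 := (shiftW z p.1, shiftC z p.2)

/-! ## The assumptions A1 and A2 -/

/-- The set of undirected edges traversed by a finite path. -/
def pathEdgeSet (l : List V) : Set (Sym2 V) := {s | ∃ p ∈ l.zip l.tail, s = Sym2.mk p.1 p.2}

/-- The σ-algebra generated by the weights of all edges other than `e`. -/
def condSigma (e : Edge) : MeasurableSpace Omega1 :=
  MeasurableSpace.comap (fun (ω : Omega1) (f : {f : Edge // f ≠ e}) => ω f.1) inferInstance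

/-- The lattice box `[-n,n]²`. -/
def boxZ (n : ℕ) : Set V := {x | |x.1| ≤ (n : ℤ) ∧ |x.2| ≤ (n : ℤ)}

/-- The `ℓ^∞` norm of a lattice point. -/
def linfZ (x : V) : ℤ := max |x.1| |x.2|

/-- The number of edges of the path `l` whose weight exceeds `t`. -/
def countBig (ω : Omega1) (t : ℝ) (l : List V) : ℕ :=
  ((l.zip l.tail).map fun p => if t < wt ω p.1 p.2 then 1 else 0).sum

/-- `mu` is the time constant of `P`: for every `z`, `T(0,nz)/n → μ(z)` almost surely. -/
def IsTimeConstant (P : Measure Omega1) (mu : ℝ × ℝ → ℝ) : Prop :=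
  ∀ z : V, ∀ᵐ ω ∂P, Tendsto (fun n : ℕ => Tdist ω 0 (n • z) / n) atTop (𝓝 (mu (toR2 z)))

/-- Assumption **A1**: i.i.d. edge weights with a continuous common distribution satisfying
the Cox–Durrett moment condition. -/
structure A1 (P : Measure Omega1) : Prop where
  prob : IsProbabilityMeasure P
  iid : ∃ m0 : Measure ℝ≥0, IsProbabilityMeasure m0 ∧
      (∀ (s : Finset Edge) (B : Edge → Set ℝ≥0), (∀ e, MeasurableSet (B e)) →
        P {ω | ∀ e ∈ s, ω e ∈ B e} = ∏ e ∈ s, m0 (B e)) ∧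
      ∀ t : ℝ≥0, m0 {t} = 0
  moment : ∫⁻ ω : Omega1,
      (↑(min (min (ω ((0, 0), true)) (ω ((0, 0), false)))
          (min (ω ((-1, 0), true)) (ω ((0, -1), false)))) : ℝ≥0∞) ^ 2 ∂P < ⊤

/-- Assumption **A2**: the translation-ergodic assumption package of the paper. -/
structure A2 (P : Measure Omega1) : Prop where
  prob : IsProbabilityMeasure P
  stationary : ∀ z : V, MeasurePreserving (shiftW z) P P
  ergodic : ∀ A : Set Omega1, MeasurableSet A → (∀ z : V, shiftW z ⁻¹' A = A) →
      P A = 0 ∨ P A = 1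
  symmetric : ∀ g : V ≃ V, AdjAuto g → MeasurePreserving (pullbackW g) P P
  moment : ∃ d : ℝ, 0 < d ∧ ∀ e : Edge, ∫⁻ ω, (ω e : ℝ≥0∞) ^ ((2 : ℝ) + d) ∂P < ⊤
  boundedShape : ∃ mu : ℝ × ℝ → ℝ, IsTimeConstant P mu ∧ ∀ z : V, z ≠ 0 → 0 < mu (toR2 z)
  uniquePT : ∀ l l' : List V, l.Chain' Adj → l'.Chain' Adj →
      pathEdgeSet l ≠ pathEdgeSet l' → P {ω | pathTime ω l = pathTime ω l'} = 0
  upwardFE : ∀ (e : Edge) (lam : ℝ≥0), 0 < lam → 0 < P {ω | lam < ω e} →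
      ∀ᵐ ω ∂P, 0 < MeasureTheory.condExp (condSigma e) P
        (Set.indicator {ω' : Omega1 | lam < ω' e} fun _ => (1 : ℝ)) ω
  geoLength : ∃ L : ℝ, Tendsto (fun n : ℕ => P {ω | ∀ x ∈ boxZ n, ∀ y ∈ boxZ n,
      ∀ l, IsGeo ω l x y → (l.length : ℝ) ≤ L * n}) atTop (𝓝 1)
  largeWeights : ∃ t d g : ℝ, 0 < t ∧ 0 < d ∧ 0 < g ∧
      (∀ e : Edge, ∀ᵐ ω ∂P, d < MeasureTheory.condExp (condSigma e) P
        (Set.indicator {ω' : Omega1 | (ω' e : ℝ) < t - d} fun _ => (1 : ℝ)) ω) ∧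
      Tendsto (fun n : ℕ => P {ω | ∀ x y : V, linfZ x = (n : ℤ) → linfZ y = (2 * n : ℤ) →
        ∀ l, IsGeo ω l x y → g * (linfZ (x - y) : ℝ) < (countBig ω t l : ℝ)})
        atTop (𝓝 1)
/-! ## The almost sure event `𝒳`, half-plane orderings, regions -/

/-- The probability-one event `𝒳` (relative to the time constant `mu` and the set `C` of
attainable supporting functionals): unique passage times; existence of finite geodesics;
the shape theorem from every vertex; asymptotically linear Busemann functions with
functionals in `C`; and `Dir(g) ⊆ Arc(ρ_g)`. -/
def Xevent (mu : ℝ × ℝ → ℝ) (C : Set (ℝ × ℝ)) : Set Omega1 :=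
  {ω |
    (∀ l l' : List V, l.Chain' Adj → l'.Chain' Adj → pathEdgeSet l ≠ pathEdgeSet l' →
      pathTime ω l ≠ pathTime ω l') ∧
    (∀ x y : V, ∃ l, IsGeo ω l x y) ∧
    (∀ x : V, Tendsto (fun y : V => (Tdist ω x y - mu (toR2 (y - x))) / nrm y)
      (comap nrm atTop) (𝓝 0)) ∧
    (∀ γ : ℕ → V, IsInfGeo ω γ → ∃ ρ ∈ C, AsympLinear ω γ ρ) ∧
    ∀ γ : ℕ → V, IsInfGeo ω γ → ∀ ρ ∈ C, AsympLinear ω γ ρ → DirSet γ ⊆ arcSet mu ρ}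

/-- The integer normal vector of the half-plane `H_i`. -/
def mvec (i : ℤ) : V :=
  if i % 8 = 0 then (1, 0)
  else if i % 8 = 1 then (1, 1)
  else if i % 8 = 2 then (0, 1)
  else if i % 8 = 3 then (-1, 1)
  else if i % 8 = 4 then (-1, 0)
  else if i % 8 = 5 then (-1, -1)
  else if i % 8 = 6 then (0, -1)
  else (1, -1)

/-- The counterclockwise boundary direction of `H_i` (the rotation of `mvec i` by `π/2`). -/
def bvec (i : ℤ) : V := (-(mvec i).2, (mvec i).1)

/-- Integer dot product on `ℤ²`. -/
def idot (x y : V) : ℤ := x.1 * y.1 + x.2 * y.2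

/-- `γ k` is the last intersection of the path `γ` with the line `{x : m·x = c}`. -/
def IsLastHit (m : V) (c : ℤ) (γ : ℕ → V) (k : ℕ) : Prop :=
  idot m (γ k) = c ∧ ∀ j, k < j → idot m (γ j) ≠ c

/-- `γ ≺ γ'` in `H_i`: for all sufficiently far translates of `∂H_i`, the last intersection of
`γ` with the translate lies (weakly) counterclockwise of that of `γ'`. -/
def PrecIn (i : ℤ) (γ γ' : ℕ → V) : Prop :=
  ∃ N : ℤ, ∀ c : ℤ, N ≤ c → ∀ k k' : ℕ,
    IsLastHit (mvec i) c γ k → IsLastHit (mvec i) c γ' k' →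
      idot (bvec i) (γ' k') ≤ idot (bvec i) (γ k)

/-- The path `γ` eventually moves into the half-plane `H`: for every `z`, only finitely many
vertices of `γ` lie outside `z + H`. -/
def MovesInto (γ : ℕ → V) (H : Set (ℝ × ℝ)) : Prop :=
  ∀ z : V, {n : ℕ | toR2 (γ n) ∉ trSet (toR2 z) H}.Finite

/-- A family of paths uniformly moves into the half-plane `H`. -/
def UnifMovesInto (F : Set (ℕ → V)) (H : Set (ℝ × ℝ)) : Prop :=
  ∀ z : V, {x : V | (∃ γ ∈ F, ∃ n, γ n = x) ∧ toR2 x ∉ trSet (toR2 z) H}.Finite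

/-- The plane curve traced by the terminal segment of a lattice path from index `a` on. -/
def traceFrom (γ : ℕ → V) (a : ℕ) : Set (ℝ × ℝ) :=
  ⋃ n : ℕ, segment ℝ (toR2 (γ (a + n))) (toR2 (γ (a + n + 1)))

/-- `γ₁ a = γ₃ b` is the last intersection point of the paths `γ₁` and `γ₃`. -/
def LastCommon (γ₁ γ₃ : ℕ → V) (a b : ℕ) : Prop :=
  γ₁ a = γ₃ b ∧ ∀ n m : ℕ, γ₁ n = γ₃ m → n ≤ a ∧ m ≤ b

/-- `U` is the region between `γ₁` and `γ₃` in `H_i`: the union of the doubly infinite path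
formed by the terminal segments of `γ₁, γ₃` after their last common vertex together with the
connected component of its complement contained in a translate of `H_i` containing both paths. -/
def IsRegionBetween (i : ℤ) (γ₁ γ₃ : ℕ → V) (U : Set (ℝ × ℝ)) : Prop :=
  ∃ a b : ℕ, LastCommon γ₁ γ₃ a b ∧
    ∃ z : V, (∀ n, toR2 (γ₁ n) ∈ trSet (toR2 z) (Hp i)) ∧
      (∀ n, toR2 (γ₃ n) ∈ trSet (toR2 z) (Hp i)) ∧
      ∃ x : ℝ × ℝ, x ∉ traceFrom γ₁ a ∪ traceFrom γ₃ b ∧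
        connectedComponentIn (traceFrom γ₁ a ∪ traceFrom γ₃ b)ᶜ x ⊆ trSet (toR2 z) (Hp i) ∧
        U = traceFrom γ₁ a ∪ traceFrom γ₃ b ∪
          connectedComponentIn (traceFrom γ₁ a ∪ traceFrom γ₃ b)ᶜ x

/-- All but finitely many vertices of `γ` lie in `U`. -/
def EventuallyInSet (γ : ℕ → V) (U : Set (ℝ × ℝ)) : Prop :=
  {n : ℕ | toR2 (γ n) ∉ U}.Finite

/-! ## Convergence of geodesics -/

/-- The finite geodesics from `x` to `zs j` converge (in the sense of eventually coinciding
initial segments) to the infinite path `γ`. -/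
def GeodesicsConverge (ω : Omega1) (zs : ℕ → V) (x : V) (γ : ℕ → V) : Prop :=
  ∀ m : ℕ, ∃ j0 : ℕ, ∀ j, j0 ≤ j → ∃ l, IsGeo ω l x (zs j) ∧ l.take (m + 1) = segList γ m

/-- A sequence of infinite paths converges to `γ`: initial segments eventually coincide. -/
def PathSeqConverges (gs : ℕ → ℕ → V) (γ : ℕ → V) : Prop :=
  ∀ m : ℕ, ∃ k0 : ℕ, ∀ k, k0 ≤ k → ∀ j ≤ m, gs k j = γ j

/-! ## Random coalescing geodesics -/

/-- The configuration `η` encodes exactly the (directed) edges of the single infinite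
self-avoiding path `γ` starting at `z`. -/
def EncodesPathFrom (η : Omega2) (z : V) (γ : ℕ → V) : Prop :=
  γ 0 = z ∧ Function.Injective γ ∧ IsInfPath γ ∧
    ∀ x y : V, η x y = true ↔ ∃ n, x = γ n ∧ y = γ (n + 1)

/-- `G(z) = σ_{-z} ∘ G ∘ σ_z`. -/
def GAt (G : Omega1 → Omega2) (z : V) (ω : Omega1) : Omega2 :=
  shiftC z (G (shiftW (-z) ω))

/-- A random coalescing geodesic. -/
structure IsRCG (P : Measure Omega1) (G : Omega1 → Omega2) : Prop where
  meas : Measurable G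
  geo : ∀ z : V, ∀ᵐ ω ∂P, ∃ γ, EncodesPathFrom (GAt G z ω) z γ ∧ IsInfGeo ω γ
  coal : ∀ y z : V, ∀ᵐ ω ∂P, ∀ γ γ', EncodesPathFrom (GAt G y ω) y γ →
      EncodesPathFrom (GAt G z ω) z γ' → Coalesce γ γ'

/-! ## Measures on non-crossing geodesics -/

/-- `γ` is an infinite directed path in the graph encoded by `η`. -/
def DirPathIn (η : Omega2) (γ : ℕ → V) : Prop := ∀ n, η (γ n) (γ (n + 1)) = true

/-- A shift-invariant probability measure on non-crossing geodesics. -/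
structure IsNCGMeasure (P : Measure Omega1) (ν : Measure (Omega1 × Omega2)) : Prop where
  prob : IsProbabilityMeasure ν
  inv : ∀ z : V, MeasurePreserving (sigmaZ z) ν ν
  marg : ν.map Prod.fst = P
  notEmpty : ν {p | ∀ x y : V, p.2 x y = false} < 1
  graph : ∀ᵐ p ∂ν,
    (∀ x y : V, p.2 x y = true → Adj x y) ∧
    (∀ x : V, (∃! y, p.2 x y = true) ∨
      ((∀ y, p.2 x y = false) ∧ ∀ y, p.2 y x = false)) ∧
    (∀ (n : ℕ) (f : ℕ → V), 0 < n → (∀ i < n, p.2 (f i) (f (i + 1)) = true) → f n ≠ f 0) ∧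
    (∀ γ : ℕ → V, DirPathIn p.2 γ → IsInfGeo p.1 γ) ∧
    ∀ γ γ' : ℕ → V, DirPathIn p.2 γ → DirPathIn p.2 γ' →
      (∀ n m : ℕ, γ n ≠ γ' m) ∨ Coalesce γ γ'

/-- The graph encoded by `η` has infinitely many coalescence classes: arbitrarily large
families of pairwise non-coalescing infinite directed paths. -/
def InfManyClasses (η : Omega2) : Prop :=
  ∀ M : ℕ, ∃ f : Fin M → ℕ → V, (∀ a, DirPathIn η (f a)) ∧
    ∀ a b : Fin M, a ≠ b → ¬Coalesce (f a) (f b)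

/-- Undirected adjacency in the graph encoded by `η`. -/
def UndirAdjC (η : Omega2) (x y : V) : Prop := η x y = true ∨ η y x = true

/-- The graph encoded by `η` has no undirected cycles. -/
def NoUndirCycle (η : Omega2) : Prop :=
  ∀ (n : ℕ) (f : ℕ → V), 3 ≤ n → (∀ i j, i < n → j < n → i ≠ j → f i ≠ f j) →
    (∀ i < n, UndirAdjC η (f i) (f ((i + 1) % n))) → False

/-! ## Standing assumptions of Section 4 -/

/-- The standing hypotheses of Section 4 of the paper: `P` satisfies A1 or A2; `|v_k| → ∞`;
`v_k/|v_k| → v` with `v` a unit vector of argument in `[0, π/4]`; and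
`δ = lim_k P(0 ∈ 𝒯_{v_k}) > 0`. -/
structure Standing (P : Measure Omega1) (v : ℕ → V) (vR : ℝ × ℝ) (δ : ℝ) : Prop where
  base : A1 P ∨ A2 P
  toInf : Tendsto (fun k => nrm (v k)) atTop atTop
  unit : nrm2 vR = 1
  sector : 0 ≤ vR.2 ∧ vR.2 ≤ vR.1
  direction : Tendsto (fun k => (nrm (v k))⁻¹ • toR2 (v k)) atTop (𝓝 vR)
  deltaPos : 0 < δ
  deltaLim : Tendsto (fun k => P {ω | InTree ω (v k) 0}) atTop (𝓝 (ENNReal.ofReal δ))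

/-- `C` is the deterministic compact set such that, almost surely, the set of functionals to
which Busemann functions of geodesics in `𝒯₀` are asymptotically linear equals `C`. -/
def IsFunctionalSet (P : Measure Omega1) (C : Set (ℝ × ℝ)) : Prop :=
  IsCompact C ∧ ∀ᵐ ω ∂P,
    {ρ : ℝ × ℝ | ∃ γ : ℕ → V, IsInfGeo ω γ ∧ γ 0 = 0 ∧ AsympLinear ω γ ρ} = C

/-- The event `𝒟`: infinitely many `k` with `0 ∈ 𝒯_{v_k}`. -/
def Devent (v : ℕ → V) : Set Omega1 := {ω | {k : ℕ | InTree ω (v k) 0}.Infinite}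

/-- `γ` is a subsequential limit of the geodesics `Geo(0, v_{I(k)})`, where `I` enumerates
the indices `ℓ` with `0 ∈ 𝒯_{v_ℓ}`. -/
def IsSubseqGeoLimit (ω : Omega1) (v : ℕ → V) (γ : ℕ → V) : Prop :=
  ∃ φ : ℕ → ℕ, StrictMono φ ∧ (∀ j, InTree ω (v (φ j)) 0) ∧
    GeodesicsConverge ω (fun j => v (φ j)) 0 γ

/-- The family `Ξ_x(k)`: infinite geodesics from `x` that extend to infinite geodesics
from `x + w`. -/
def XiSet (ω : Omega1) (x w : V) : Set (ℕ → V) :=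
  {γ | IsInfGeo ω γ ∧ γ 0 = x ∧ ∃ γ' : ℕ → V, IsInfGeo ω γ' ∧ γ' 0 = x + w ∧
    ∃ s : ℕ, ∀ n, γ' (s + n) = γ n}

/-- The localization event of Lemma `hpfromvk`. -/
def LocEvent (v : ℕ → V) (i : ℤ) (L : ℝ) (k : ℕ) : Set Omega1 :=
  {ω | (∀ l, IsGeo ω l 0 (v k) → ∀ p ∈ l, toR2 p ∈ trSet (toR2 (v k)) (msumHL (i + 4) L)) ∧
    InTree ω (v k) 0 ∧
    UnifMovesInto (XiSet ω 0 (v k)) (Hp (i + 4)) ∧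
    ∀ γ ∈ XiSet ω 0 (v k), ∀ n, toR2 (γ n) ∈ msumHL (i + 4) L}

/-- The conclusion of Lemma `hpfromvk` for the half-plane index `i`. -/
def HpLocalized (P : Measure Omega1) (v : ℕ → V) (δ : ℝ) (i : ℤ) : Prop :=
  ∃ L0 : ℝ, ∀ L : ℝ, L0 ≤ L →
    ENNReal.ofReal (δ / 2) ≤ Filter.limsup (fun k => P (LocEvent v i L k)) atTop

/-! ## The good events and the measures ν and υ -/

/-- The lattice point `j·L·e₂`. -/
def e2L (L : ℕ) (j : ℤ) : V := ((0 : ℤ), j * (L : ℤ))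

/-- The event `Good_{k,L}(x)` (with the convention that the half-plane of Lemma `hpfromvk`
is `H_0`). -/
def GoodEvent (mu : ℝ × ℝ → ℝ) (C : Set (ℝ × ℝ)) (w : V) (L : ℝ) (x : V) : Set Omega1 :=
  Xevent mu C ∩
  {ω | InTree ω (x + w) x ∧
    (∀ l, IsGeo ω l x (x + w) → ∀ p ∈ l,
      toR2 p ∈ trSet (toR2 x) (Hp 0 ∪ boxR (L / 4)) ∧
      toR2 p ∈ trSet (toR2 (x + w)) (msumHL 4 (L / 4))) ∧
    (∀ γ ∈ XiSet ω x w, ∀ n, toR2 (γ n) ∈ trSet (toR2 x) (msumHL 4 (L / 4))) ∧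
    UnifMovesInto (XiSet ω x w) (Hp 4)}

/-- The event `Good*_{k,L}(x)`. -/
def GoodStar (mu : ℝ × ℝ → ℝ) (C : Set (ℝ × ℝ)) (w : V) (L : ℕ) (x : V) : Set Omega1 :=
  GoodEvent mu C w L x ∩ GoodEvent mu C w L (x + e2L L 1) ∩
  {ω | ∀ l l', IsGeo ω l x (x + w) → IsGeo ω l' (x + e2L L 1) (x + e2L L 1 + w) →
    ∀ p ∈ l, p ∉ l'}

/-- Assumption (raul seixas): `limsup_k P(Good*_{k,L}) > δ' > 0`. -/
def RaulSeixas (P : Measure Omega1) (mu : ℝ × ℝ → ℝ) (C : Set (ℝ × ℝ)) (v : ℕ → V)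
    (L : ℕ) : Prop :=
  ∃ d' : ℝ≥0∞, 0 < d' ∧ d' < Filter.limsup (fun k => P (GoodStar mu C (v k) L 0)) atTop

/-- The set `I_k(u)` of starting points of the geodesic family `ℱ_k(u)`. -/
def Iset (mu : ℝ × ℝ → ℝ) (C : Set (ℝ × ℝ)) (w : V) (L : ℕ) (u : V) (ω : Omega1) : Set V :=
  {x | (∃ j : ℤ, x = -u + e2L L j) ∧ ω ∈ GoodStar mu C w L x}

/-- The directed-edge configuration of the geodesic family `ℱ_k(u)`. -/
def etaNu (mu : ℝ × ℝ → ℝ) (C : Set (ℝ × ℝ)) (w : V) (L : ℕ) (ω : Omega1) (u : V) : Omega2 :=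
  fun x y =>
    pbool (∃ x0 ∈ Iset mu C w L u ω, ∃ l, IsGeo ω l x0 (x0 + w) ∧ (x, y) ∈ l.zip l.tail)

/-- The uniform probability measure on a finite set of lattice points. -/
def uniformOn (s : Finset V) : Measure V :=
  (s.card : ℝ≥0∞)⁻¹ • ∑ x ∈ s, Measure.dirac x

/-- The support `{1,…,w·e₁} × {1,…,L}` of the randomization variable `U_k`. -/
def suppNu (w : V) (L : ℕ) : Finset V :=
  Finset.Icc (1 : ℤ) w.1 ×ˢ Finset.Icc (1 : ℤ) (L : ℤ)

/-- The measure `ν_k`: the joint law of the weights and the directed-edge configuration of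
`ℱ_k(U_k)` with `U_k` uniform and independent of the weights. -/
def nuK (P : Measure Omega1) (mu : ℝ × ℝ → ℝ) (C : Set (ℝ × ℝ)) (w : V) (L : ℕ) :
    Measure (Omega1 × Omega2) :=
  (P.prod (uniformOn (suppNu w L))).map fun p => (p.1, etaNu mu C w L p.1 p.2)

/-- Weak convergence of measures on `Ω₁ × Ω₂` (tested against bounded continuous functions,
with the product topologies). -/
def IsWeakLimit (μs : ℕ → Measure (Omega1 × Omega2)) (μ : Measure (Omega1 × Omega2)) : Prop :=
  ∀ f : BoundedContinuousFunction (Omega1 × Omega2) ℝ,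
    Tendsto (fun m => ∫ p, f p ∂(μs m)) atTop (𝓝 (∫ p, f p ∂μ))

open scoped Classical in
/-- The counterclockwisemost element `Γ_k(x)` of `Ξ_x(k)` in the half-plane `H_4`,
defined on `Good_{k,L}(x)` (and `none` otherwise). -/
def GammaSel (mu : ℝ × ℝ → ℝ) (C : Set (ℝ × ℝ)) (w : V) (L : ℕ) (x : V) (ω : Omega1) :
    Option (ℕ → V) :=
  if h : ω ∈ GoodEvent mu C w L x ∧
      ∃ γ ∈ XiSet ω x w, ∀ γ' ∈ XiSet ω x w, PrecIn 4 γ γ'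
  then some h.2.choose else none

/-- The geodesic family `𝔊_k(u) = {Γ_k(u + ℓLe₂) : -4k ≤ ℓ ≤ 4k}`. -/
def GSet (mu : ℝ × ℝ → ℝ) (C : Set (ℝ × ℝ)) (w : V) (L : ℕ) (k : ℕ) (u : V) (ω : Omega1) :
    Set (ℕ → V) :=
  {γ | ∃ j : ℤ, -(4 * (k : ℤ)) ≤ j ∧ j ≤ 4 * (k : ℤ) ∧
    GammaSel mu C w L (u + e2L L j) ω = some γ}

/-- The event `N_k(u)`: two distinct elements of `𝔊_k(u)` intersect. -/
def Nevent (mu : ℝ × ℝ → ℝ) (C : Set (ℝ × ℝ)) (v : ℕ → V) (L : ℕ) (k : ℕ) (u : V) :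
    Set Omega1 :=
  {ω | ∃ γ₁ ∈ GSet mu C (v k) L k u ω, ∃ γ₂ ∈ GSet mu C (v k) L k u ω,
    γ₁ ≠ γ₂ ∧ ∃ n m : ℕ, γ₁ n = γ₂ m}

/-- The event `Good°_{k,L}(x,y)`. -/
def GoodCirc (mu : ℝ × ℝ → ℝ) (C : Set (ℝ × ℝ)) (w : V) (L : ℝ) (x y : V) : Set Omega1 :=
  GoodEvent mu C w L x ∩ GoodEvent mu C w L y ∩
  {ω | ∃ l l', IsGeo ω l x (x + w) ∧ IsGeo ω l' y (y + w) ∧ ∃ p, p ∈ l ∧ p ∈ l'}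

/-- The thinning condition: along the (sub)sequence `(v_k)`,
`P(Good° | Good ∩ Good) ≥ 1 - 1/k³` uniformly over `-4k ≤ ℓ₁, ℓ₂ ≤ 4k`. -/
def ThinHyp (P : Measure Omega1) (mu : ℝ × ℝ → ℝ) (C : Set (ℝ × ℝ)) (v : ℕ → V)
    (L : ℕ) : Prop :=
  ∀ k : ℕ, ∀ j₁ j₂ : ℤ, -(4 * (k : ℤ)) ≤ j₁ → j₁ ≤ 4 * (k : ℤ) →
    -(4 * (k : ℤ)) ≤ j₂ → j₂ ≤ 4 * (k : ℤ) →
    (1 - ((k : ℝ≥0∞) ^ 3)⁻¹) *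
        P (GoodEvent mu C (v k) L (e2L L j₁) ∩ GoodEvent mu C (v k) L (e2L L j₂)) ≤
      P (GoodCirc mu C (v k) L (e2L L j₁) (e2L L j₂))

/-- Assumption (raul2), the negation of (raul seixas): for every `ℓ ≥ L`, the conditional
probability of `Good°_{k,L}(0, ℓe₂)` given `Good_{k,L}(0) ∩ Good_{k,L}(ℓe₂)` tends to `1`. -/
def Raul2Hyp (P : Measure Omega1) (mu : ℝ × ℝ → ℝ) (C : Set (ℝ × ℝ)) (v : ℕ → V)
    (L : ℕ) : Prop :=
  ∀ ℓ : ℤ, (L : ℤ) ≤ ℓ → ∀ ε : ℝ≥0∞, 0 < ε → ε < 1 →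
    ∀ᶠ k in atTop, (1 - ε) *
        P (GoodEvent mu C (v k) L 0 ∩ GoodEvent mu C (v k) L ((0 : ℤ), ℓ)) ≤
      P (GoodCirc mu C (v k) L 0 ((0 : ℤ), ℓ))

/-- The directed-edge configuration of the geodesic family `𝔊_k(u)`. -/
def etaUps (mu : ℝ × ℝ → ℝ) (C : Set (ℝ × ℝ)) (w : V) (L k : ℕ) (ω : Omega1) (u : V) :
    Omega2 :=
  fun x y => pbool (∃ γ ∈ GSet mu C w L k u ω, ∃ n, γ n = x ∧ γ (n + 1) = y)

/-- The support `{0,…,⌊δk/32⌋} × {-kL,…,kL}` of the randomization variable for `υ_k`. -/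
def suppUps (δ : ℝ) (k L : ℕ) : Finset V :=
  Finset.Icc (0 : ℤ) ⌊δ * k / 32⌋ ×ˢ Finset.Icc (-(k * L : ℤ)) ((k * L : ℤ))

/-- The measure `υ_k`. -/
def upsK (P : Measure Omega1) (mu : ℝ × ℝ → ℝ) (C : Set (ℝ × ℝ)) (v : ℕ → V) (δ : ℝ)
    (L : ℕ) (k : ℕ) : Measure (Omega1 × Omega2) :=
  (P.prod (uniformOn (suppUps δ k L))).map fun p => (p.1, etaUps mu C (v k) L k p.1 p.2)

/-! ## Highway arcs -/

/-- `e` is a highway arc: it is traversed by the geodesic `Geo(0,z)` for infinitely many `z`. -/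
def IsHighwayArc (ω : Omega1) (e : Edge) : Prop :=
  {z : V | ∃ l, IsGeo ω l 0 z ∧
    ((e.1, e.1 + dirStep e.2) ∈ l.zip l.tail ∨
      (e.1 + dirStep e.2, e.1) ∈ l.zip l.tail)}.Infinite

/-- The set of highway arcs intersecting the circle of radius `r` about the origin
(whose cardinality is `f_r`). -/
def frSet (ω : Omega1) (r : ℝ) : Set Edge :=
  {e | IsHighwayArc ω e ∧
    ∃ p ∈ segment ℝ (toR2 e.1) (toR2 (e.1 + dirStep e.2)), nrm2 p = r}
section GeoBetweenAux

lemma wt_nonneg (ω : Omega1) (x y : V) : 0 ≤ wt ω x y := (wtN ω x y).coe_nonneg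

lemma pathTime_cons (ω : Omega1) (x y : V) (r : List V) :
    pathTime ω (x :: y :: r) = wt ω x y + pathTime ω (y :: r) := rfl

lemma pathTime_nonneg (ω : Omega1) : ∀ l, 0 ≤ pathTime ω l
  | [] => le_refl 0
  | [_] => le_refl 0
  | x :: y :: r => by
      rw [pathTime_cons]
      exact add_nonneg (wt_nonneg ω x y) (pathTime_nonneg ω (y :: r))

lemma pathTime_split (ω : Omega1) : ∀ (s : List V) (x : V) (t : List V),
    pathTime ω (s ++ x :: t) = pathTime ω (s ++ [x]) + pathTime ω (x :: t)
  | [], x, t => by simp [pathTime]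
  | [a], x, t => by simp [pathTime_cons, pathTime]
  | a :: b :: s', x, t => by
      have ih := pathTime_split ω (b :: s') x t
      simp only [List.cons_append, pathTime_cons] at *
      rw [ih]; ring

lemma tdist_le (ω : Omega1) {l : List V} {x y : V} (h : IsPathFromTo l x y) :
    Tdist ω x y ≤ pathTime ω l := by
  apply csInf_le
  · exact ⟨0, fun t ⟨l', _, ht⟩ => ht ▸ pathTime_nonneg ω l'⟩
  · exact ⟨l, h, rfl⟩

lemma pathEdgeSet_nil : pathEdgeSet ([] : List V) = ∅ := by simp [pathEdgeSet]
lemma pathEdgeSet_single (x : V) : pathEdgeSet [x] = ∅ := by simp [pathEdgeSet]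

lemma pathEdgeSet_cons (x y : V) (t : List V) :
    pathEdgeSet (x :: y :: t) = insert (s(x, y)) (pathEdgeSet (y :: t)) := by
  ext s
  simp only [pathEdgeSet, Set.mem_setOf_eq, Set.mem_insert_iff, List.tail_cons,
    List.zip_cons_cons, List.mem_cons]
  constructor
  · rintro ⟨p, hp | hp, rfl⟩
    · exact Or.inl (by rw [hp])
    · exact Or.inr ⟨p, hp, rfl⟩
  · rintro (rfl | ⟨p, hp, rfl⟩)
    · exact ⟨(x, y), Or.inl rfl, rfl⟩
    · exact ⟨p, Or.inr hp, rfl⟩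

lemma mem_pathEdgeSet {l : List V} {s : Sym2 V} (h : s ∈ pathEdgeSet l) :
    ∃ u w : V, s = s(u, w) ∧ u ∈ l ∧ w ∈ l := by
  obtain ⟨p, hp, rfl⟩ := h
  obtain ⟨h1, h2⟩ := List.of_mem_zip hp
  exact ⟨p.1, p.2, rfl, h1, (l.tail_subset h2)⟩

/-- On the unique-passage-time event, each edge has positive weight. -/
lemma wt_pos {ω : Omega1}
    (huniq : ∀ l l' : List V, l.Chain' Adj → l'.Chain' Adj → pathEdgeSet l ≠ pathEdgeSet l' →
      pathTime ω l ≠ pathTime ω l') {x y : V} (h : Adj x y) : 0 < wt ω x y := by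
  have hne : pathEdgeSet [x, y] ≠ pathEdgeSet [x] := by
    rw [pathEdgeSet_single]
    intro he
    have : s(x, y) ∈ pathEdgeSet [x, y] := ⟨(x, y), by simp, rfl⟩
    rw [he] at this; exact this
  have := huniq [x, y] [x] (List.isChain_pair.mpr h) (List.isChain_singleton x) hne
  have h0 : pathTime ω [x] = 0 := rfl
  have h1 : pathTime ω [x, y] = wt ω x y + 0 := rfl
  rw [h0, h1] at this
  rcases lt_or_eq_of_le (wt_nonneg ω x y) with hlt | heq
  · exact hlt
  · exact absurd (by rw [← heq]; ring) this

lemma chain'_pathTime_pos {ω : Omega1}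
    (huniq : ∀ l l' : List V, l.Chain' Adj → l'.Chain' Adj → pathEdgeSet l ≠ pathEdgeSet l' →
      pathTime ω l ≠ pathTime ω l') {m : List V} (hc : m.Chain' Adj) (hlen : 2 ≤ m.length) :
    0 < pathTime ω m := by
  match m, hlen with
  | x :: y :: r, _ =>
    rw [pathTime_cons]
    have : Adj x y := (List.isChain_cons_cons.mp hc).1
    exact add_pos_of_pos_of_nonneg (wt_pos huniq this) (pathTime_nonneg ω (y :: r))

lemma geo_nodup {ω : Omega1}
    (huniq : ∀ l l' : List V, l.Chain' Adj → l'.Chain' Adj → pathEdgeSet l ≠ pathEdgeSet l' →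
      pathTime ω l ≠ pathTime ω l') {l : List V} {x y : V} (hl : IsGeo ω l x y) : l.Nodup := by
  by_contra hnd
  rw [List.nodup_iff_injective_get] at hnd
  simp only [Function.Injective] at hnd
  push_neg at hnd
  obtain ⟨⟨i, hi⟩, ⟨j, hj⟩, hget, hne⟩ := hnd
  have hvne : i ≠ j := fun h => hne (by simp [h])
  wlog hij : i < j generalizing i j
  · exact this j hj i hi hget.symm (fun h => hne (by simp [h.symm])) hvne.symm (by omega)
  simp only [List.get_eq_getElem] at hget
  -- the shortcut path
  set l' : List V := l.take (i + 1) ++ l.drop (j + 1) with hl'def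
  have htake : l.take i ++ [l[i]] = l.take (i + 1) := by
    rw [← List.take_concat_get hi, List.concat_eq_append]
  have hdropj : l.drop j = l[j] :: l.drop (j + 1) := List.drop_eq_getElem_cons hj
  have hsplitl : pathTime ω l = pathTime ω (l.take (j + 1)) + pathTime ω (l.drop j) := by
    conv_lhs => rw [← List.take_append_drop j l, hdropj]
    rw [pathTime_split, ← hdropj]
    congr 2
    rw [← List.take_concat_get hj, List.concat_eq_append]
  have hsplitt : pathTime ω (l.take (j + 1)) =
      pathTime ω (l.take (i + 1)) + pathTime ω ((l.take (j + 1)).drop i) := by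
    have hit : i < (l.take (j + 1)).length := by
      rw [List.length_take]; omega
    have : (l.take (j + 1))[i] = l[i] := List.getElem_take
    conv_lhs => rw [← List.take_append_drop i (l.take (j + 1)),
      List.drop_eq_getElem_cons hit]
    rw [pathTime_split, ← List.drop_eq_getElem_cons hit]
    congr 2
    rw [this, List.take_take, min_eq_left (by omega : i ≤ j + 1), htake]
  have hchain : l.Chain' Adj := hl.1.2.1
  have hmidchain : ((l.take (j + 1)).drop i).Chain' Adj :=
    (hchain.prefix (List.take_prefix _ _)).suffix (List.drop_suffix _ _)
  have hmidlen : 2 ≤ ((l.take (j + 1)).drop i).length := by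
    rw [List.length_drop, List.length_take]; omega
  have hmidpos : 0 < pathTime ω ((l.take (j + 1)).drop i) :=
    chain'_pathTime_pos huniq hmidchain hmidlen
  have hsplitl' : pathTime ω l' = pathTime ω (l.take (i + 1)) + pathTime ω (l.drop j) := by
    rcases Nat.lt_or_ge (j + 1) l.length with hlt | hge
    · have e1 : l.take (i+1) ++ l.drop (j+1) = l.take i ++ (l[i] :: l.drop (j+1)) := by
        rw [← htake, List.append_assoc, List.singleton_append]
      have e2 : (l[i] : V) :: l.drop (j+1) = l.drop j := by rw [hget, ← hdropj]
      rw [hl'def, e1, pathTime_split, htake, e2]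
    · have : l.drop (j + 1) = [] := List.drop_eq_nil_of_le (by omega)
      rw [hl'def, this, List.append_nil, hdropj]
      have : pathTime ω (l[j] :: l.drop (j + 1)) = 0 := by rw [this]; rfl
      rw [this, add_zero]
  have hlt : pathTime ω l' < pathTime ω l := by
    rw [hsplitl, hsplitt, hsplitl']; linarith
  -- l' is a path from x to y
  have hlne : l ≠ [] := hl.1.1
  have hpath' : IsPathFromTo l' x y := by
    refine ⟨?_, ?_, ?_, ?_⟩
    · intro h
      have : l.take (i + 1) = [] := by
        rcases List.append_eq_nil_iff.mp h with ⟨h1, _⟩; exact h1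
      have : (l.take (i + 1)).length = 0 := by rw [this]; rfl
      rw [List.length_take] at this; omega
    · rw [hl'def]; unfold List.Chain'; rw [List.isChain_append]
      refine ⟨hchain.prefix (List.take_prefix _ _), hchain.suffix (List.drop_suffix _ _), ?_⟩
      intro p hp q hq
      rw [← htake, List.getLast?_append] at hp
      simp only [List.getLast?_singleton, Option.or_some, Option.some_or, Option.mem_def,
        Option.some.injEq] at hp
      rcases Nat.lt_or_ge (j + 1) l.length with hlt2 | hge
      · rw [List.drop_eq_getElem_cons hlt2] at hq
        simp only [List.head?_cons, Option.mem_def, Option.some.injEq] at hq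
        subst hp; subst hq
        rw [hget]
        have := List.isChain_iff_getElem.mp hchain j (by omega)
        simpa using this
      · rw [List.drop_eq_nil_of_le (by omega)] at hq
        simp at hq
    · have h0 : 0 < l.length := List.length_pos_iff.mpr hlne
      have : l'.head? = l.head? := by
        rcases l with _ | ⟨a, r⟩
        · simp at hlne
        · simp [hl'def, List.take_succ_cons]
      rw [this]; exact hl.1.2.2.1
    · rcases Nat.lt_or_ge (j + 1) l.length with hlt2 | hge
      · have hdne : l.drop (j + 1) ≠ [] := by
          intro h
          have := congrArg List.length h
          rw [List.length_drop] at this; simp at this; omega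
        have h1 : l'.getLast? = (l.drop (j + 1)).getLast? := by
          rw [hl'def, List.getLast?_append, Option.or_of_isSome
            (List.getLast?_isSome.mpr hdne)]
        have h2 : l.getLast? = (l.drop (j + 1)).getLast? := by
          conv_lhs => rw [← List.take_append_drop (j + 1) l]
          rw [List.getLast?_append, Option.or_of_isSome (List.getLast?_isSome.mpr hdne)]
        rw [h1, ← h2]; exact hl.1.2.2.2
      · have hj1 : j = l.length - 1 := by omega
        have hdnil : l.drop (j + 1) = [] := List.drop_eq_nil_of_le (by omega)
        have h1 : l'.getLast? = some l[i] := by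
          rw [hl'def, hdnil, List.append_nil, ← htake, List.getLast?_append]
          simp
        have h2 : l.getLast? = some l[j] := by
          rw [List.getLast?_eq_getElem?, List.getElem?_eq_getElem (by omega)]
          congr 1
          congr 1
          omega
        rw [h1, hget, ← h2]; exact hl.1.2.2.2
  have := tdist_le ω hpath'
  rw [← hl.2] at this
  linarith

lemma edge_determines : ∀ (n : ℕ) (l l' : List V), l.length ≤ n → l.Nodup → l'.Nodup →
    l.head? = l'.head? → pathEdgeSet l = pathEdgeSet l' → l = l' := by
  intro n
  induction n with
  | zero =>
    intro l l' hlen _ _ hhead _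
    have : l = [] := List.length_eq_zero_iff.mp (by omega)
    subst this
    exact (List.head?_eq_none_iff.mp (by rw [← hhead]; rfl)).symm
  | succ n ih =>
    intro l l' hlen hnd hnd' hhead hedge
    match l with
    | [] => exact (List.head?_eq_none_iff.mp (by rw [← hhead]; rfl)).symm
    | [x] =>
      match l' with
      | [] => simp at hhead
      | x' :: t' =>
        simp only [List.head?_cons, Option.some.injEq] at hhead
        subst hhead
        match t' with
        | [] => rfl
        | y' :: t'' =>
          exfalso
          have : s(x, y') ∈ pathEdgeSet [x] := by
            rw [hedge, pathEdgeSet_cons]; exact Set.mem_insert _ _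
          rw [pathEdgeSet_single] at this
          exact this
    | x :: y :: t =>
      match l' with
      | [] => simp at hhead
      | x' :: t' =>
        simp only [List.head?_cons, Option.some.injEq] at hhead
        subst hhead
        have hmem : s(x, y) ∈ pathEdgeSet (x :: t') := by
          rw [← hedge, pathEdgeSet_cons]; exact Set.mem_insert _ _
        obtain ⟨p, hp, hps⟩ := hmem
        have hxt' : x ∉ t' := (List.nodup_cons.mp hnd').1
        rcases Sym2.eq_iff.mp hps.symm with ⟨hp1, hp2⟩ | ⟨hp1, hp2⟩
        · -- p = (x, y)
          match t' with
          | [] => simp at hp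
          | c :: t'' =>
            have hy : y = c := by
              simp only [List.tail_cons, List.zip_cons_cons, List.mem_cons] at hp
              rcases hp with hp | hp
              · rw [hp] at hp2; exact hp2.symm
              · exfalso
                have := (List.of_mem_zip hp).1
                rw [hp1] at this
                exact hxt' this
            subst hy
            have hxl : x ∉ y :: t := (List.nodup_cons.mp hnd).1
            have hxl' : x ∉ y :: t'' := hxt'
            have hnotmem : ∀ (m : List V), x ∉ m → s(x, y) ∉ pathEdgeSet m := by
              intro m hxm hc
              obtain ⟨u, w, hs, hu, hw⟩ := mem_pathEdgeSet hc
              rcases Sym2.eq_iff.mp hs with ⟨h1, _⟩ | ⟨h1, _⟩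
              · exact hxm (by rw [h1]; exact hu)
              · exact hxm (by rw [h1]; exact hw)
            have hA : pathEdgeSet (y :: t) = pathEdgeSet (y :: t'') := by
              have e1 := pathEdgeSet_cons x y t
              have e2 := pathEdgeSet_cons x y t''
              have h1 := hnotmem _ hxl
              have h2 := hnotmem _ hxl'
              calc pathEdgeSet (y :: t)
                  = insert (s(x, y)) (pathEdgeSet (y :: t)) \ {s(x, y)} :=
                    (Set.insert_diff_self_of_notMem h1).symm
                _ = insert (s(x, y)) (pathEdgeSet (y :: t'')) \ {s(x, y)} := by
                    rw [← e1, ← e2, hedge]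
                _ = pathEdgeSet (y :: t'') := Set.insert_diff_self_of_notMem h2
            have := ih (y :: t) (y :: t'') (by simp at hlen ⊢; omega)
              (List.nodup_cons.mp hnd).2 (List.nodup_cons.mp hnd').2 rfl hA
            rw [this]
        · -- p = (y, x) : x appears in the tail of l', contradiction
          exfalso
          have := (List.of_mem_zip hp).2
          rw [hp2] at this
          exact hxt' (by simpa using this)

/-- On the unique-passage-time event, geodesics between two given points are unique. -/
lemma geo_unique {ω : Omega1}
    (huniq : ∀ l l' : List V, l.Chain' Adj → l'.Chain' Adj → pathEdgeSet l ≠ pathEdgeSet l' →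
      pathTime ω l ≠ pathTime ω l') {l l' : List V} {x y : V}
    (h : IsGeo ω l x y) (h' : IsGeo ω l' x y) : l = l' := by
  have htime : pathTime ω l = pathTime ω l' := by rw [h.2, h'.2]
  have hedge : pathEdgeSet l = pathEdgeSet l' := by
    by_contra hne
    exact huniq l l' h.1.2.1 h'.1.2.1 hne htime
  exact edge_determines l.length l l' le_rfl (geo_nodup huniq h) (geo_nodup huniq h')
    (by rw [h.1.2.2.1, h'.1.2.2.1]) hedge

lemma pathTime_take_drop (ω : Omega1) (l : List V) {m : ℕ} (hm : m < l.length) :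
    pathTime ω l = pathTime ω (l.take (m + 1)) + pathTime ω (l.drop m) := by
  have hdrop : l.drop m = l[m] :: l.drop (m + 1) := List.drop_eq_getElem_cons hm
  conv_lhs => rw [← List.take_append_drop m l, hdrop]
  rw [pathTime_split, ← hdrop]
  congr 2
  rw [← List.take_concat_get hm, List.concat_eq_append]

lemma head?_take_succ (l : List V) (m : ℕ) : (l.take (m + 1)).head? = l.head? := by
  cases l <;> simp

lemma getLast?_take_succ (l : List V) {m : ℕ} (hm : m < l.length) :
    (l.take (m + 1)).getLast? = some l[m] := by
  rw [← List.take_concat_get hm, List.concat_eq_append]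
  exact List.getLast?_concat

lemma drop_ne_nil {l : List V} {m : ℕ} (hm : m < l.length) : l.drop m ≠ [] := by
  intro h
  have := congrArg List.length h
  rw [List.length_drop] at this
  simp at this; omega

lemma getLast?_drop' {l : List V} {m : ℕ} (hm : m < l.length) :
    (l.drop m).getLast? = l.getLast? := by
  conv_rhs => rw [← List.take_append_drop m l]
  rw [List.getLast?_append, Option.or_of_isSome (List.getLast?_isSome.mpr (drop_ne_nil hm))]

lemma path_take {l : List V} {x y : V} (h : IsPathFromTo l x y) {m : ℕ} (hm : m < l.length) :
    IsPathFromTo (l.take (m + 1)) x l[m] := by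
  refine ⟨?_, h.2.1.prefix (List.take_prefix _ _), ?_, getLast?_take_succ l hm⟩
  · intro hc
    have h0 : (l.take (m + 1)).length = 0 := by rw [hc]; rfl
    rw [List.length_take] at h0
    omega
  · rw [head?_take_succ]; exact h.2.2.1

lemma path_drop {l : List V} {x y : V} (h : IsPathFromTo l x y) {m : ℕ} (hm : m < l.length) :
    IsPathFromTo (l.drop m) l[m] y := by
  refine ⟨drop_ne_nil hm, h.2.1.suffix (List.drop_suffix _ _), ?_, ?_⟩
  · rw [List.drop_eq_getElem_cons hm]; rfl
  · rw [getLast?_drop' hm]; exact h.2.2.2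

/-- A prefix of a geodesic is a geodesic. -/
lemma geo_prefix {ω : Omega1} (hex : ∀ a b : V, ∃ g, IsGeo ω g a b)
    {l : List V} {x y : V} (hl : IsGeo ω l x y) {m : ℕ} (hm : m < l.length) :
    IsGeo ω (l.take (m + 1)) x l[m] := by
  have hptake := path_take hl.1 hm
  have hpdrop := path_drop hl.1 hm
  refine ⟨hptake, ?_⟩
  have hle : Tdist ω x l[m] ≤ pathTime ω (l.take (m + 1)) := tdist_le ω hptake
  rcases eq_or_lt_of_le hle with h | h
  · exact h.symm
  exfalso
  obtain ⟨g, hg⟩ := hex x l[m]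
  -- join g with the suffix of l
  have hgne : g ≠ [] := hg.1.1
  have hglast : g.getLast hgne = l[m] := by
    have := hg.1.2.2.2
    rwa [List.getLast?_eq_getLast hgne, Option.some_inj] at this
  have hgdec : g.dropLast ++ [l[m]] = g := by
    rw [← hglast]; exact List.dropLast_append_getLast hgne
  set j : List V := g.dropLast ++ l.drop m with hj
  have hdrop : l.drop m = l[m] :: l.drop (m + 1) := List.drop_eq_getElem_cons hm
  have hjtime : pathTime ω j = pathTime ω g + pathTime ω (l.drop m) := by
    rw [hj, hdrop, pathTime_split, hgdec, ← hdrop]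
  have hjchain : j.Chain' Adj := by
    rw [hj]; unfold List.Chain'; rw [List.isChain_append]
    refine ⟨hg.1.2.1.prefix (List.dropLast_prefix g), hpdrop.2.1, ?_⟩
    intro p hp q hq
    have hc : (g.dropLast ++ [l[m]]).Chain' Adj := by rw [hgdec]; exact hg.1.2.1
    unfold List.Chain' at hc; rw [List.isChain_append] at hc
    have hq' : q = l[m] := by
      rw [hdrop] at hq
      rw [List.head?_cons, Option.mem_def, Option.some_inj] at hq
      exact hq.symm
    exact hq' ▸ hc.2.2 p hp (l[m]) rfl
  have hjhead : j.head? = some x := by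
    rcases List.eq_nil_or_concat g.dropLast with hnil | ⟨s, a, hsa⟩
    · have : g = [l[m]] := by rw [← hgdec, hnil]; rfl
      have hx : x = l[m] := by
        have hh := hg.1.2.2.1
        rw [this] at hh
        simp at hh
        exact hh.symm
      rw [hj, hnil, List.nil_append, hdrop, hx]; rfl
    · have h1 : j.head? = g.dropLast.head? := by
        rw [hj, List.head?_append_of_ne_nil]
        rw [hsa]; simp
      have h2 : g.head? = g.dropLast.head? := by
        conv_lhs => rw [← hgdec]
        rw [List.head?_append_of_ne_nil]
        rw [hsa]; simp
      rw [h1, ← h2]; exact hg.1.2.2.1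
  have hjlast : j.getLast? = some y := by
    rw [hj, List.getLast?_append,
      Option.or_of_isSome (List.getLast?_isSome.mpr (drop_ne_nil hm))]
    rw [getLast?_drop' hm]; exact hl.1.2.2.2
  have hjpath : IsPathFromTo j x y := by
    refine ⟨?_, hjchain, hjhead, hjlast⟩
    rw [hj]
    intro hc
    exact (drop_ne_nil hm) (List.append_eq_nil_iff.mp hc).2
  have hTj : Tdist ω x y ≤ pathTime ω j := tdist_le ω hjpath
  rw [hjtime, hg.2] at hTj
  have hsplit := pathTime_take_drop ω l hm
  rw [hl.2] at hsplit
  linarith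

lemma segList_length (γ : ℕ → V) (j : ℕ) : (segList γ j).length = j + 1 := by
  simp [segList]

lemma segList_getElem (γ : ℕ → V) (j n : ℕ) (h : n < (segList γ j).length) :
    (segList γ j)[n] = γ n := by
  simp [segList]

/-- If a geodesic from `0` hits a vertex of an infinite geodesic `γ` from `0` at
position `m`, then its first `m+1` vertices are exactly the initial vertices of `γ`. -/
lemma geo_hit {ω : Omega1}
    (huniq : ∀ l l' : List V, l.Chain' Adj → l'.Chain' Adj → pathEdgeSet l ≠ pathEdgeSet l' →
      pathTime ω l ≠ pathTime ω l')
    (hex : ∀ a b : V, ∃ g, IsGeo ω g a b)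
    {γ : ℕ → V} (hγ : IsInfGeo ω γ) (hγ0 : γ 0 = 0)
    {l : List V} {y : V} (hl : IsGeo ω l 0 y) {m : ℕ} (hm : m < l.length)
    {j : ℕ} (hj : l[m] = γ j) :
    ∀ n, n ≤ m → ∀ (hn : n < l.length), l[n] = γ n := by
  have htake : IsGeo ω (l.take (m + 1)) 0 (γ j) := hj ▸ geo_prefix hex hl hm
  have hseg : IsGeo ω (segList γ j) 0 (γ j) := by
    have := hγ.2 j
    rwa [hγ0] at this
  have heq : l.take (m + 1) = segList γ j := geo_unique huniq htake hseg
  intro n hn hnl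
  have hlen : n < (l.take (m + 1)).length := by
    rw [List.length_take]; omega
  have h1 : l[n] = (l.take (m + 1))[n] := List.getElem_take.symm
  have h2 := List.getElem_of_eq heq hlen
  rw [h1, h2, segList_getElem]

lemma toR2_inj : Function.Injective toR2 := by
  intro p q h
  obtain ⟨h1, h2⟩ := Prod.ext_iff.mp h
  simp only [toR2] at h1 h2
  exact Prod.ext (by exact_mod_cast h1) (by exact_mod_cast h2)

lemma toR2_add_h (u : V) : toR2 (u + dirStep true) = ((u.1 : ℝ) + 1, (u.2 : ℝ)) := by
  simp [toR2, dirStep, Prod.ext_iff]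

lemma toR2_add_v (u : V) : toR2 (u + dirStep false) = ((u.1 : ℝ), (u.2 : ℝ) + 1) := by
  simp [toR2, dirStep, Prod.ext_iff]

lemma mem_seg_horiz {u : V} {x : ℝ × ℝ} :
    x ∈ segment ℝ (toR2 u) (toR2 (u + dirStep true)) ↔
      x.2 = (u.2 : ℝ) ∧ (u.1 : ℝ) ≤ x.1 ∧ x.1 ≤ (u.1 : ℝ) + 1 := by
  rw [toR2_add_h]
  constructor
  · rintro ⟨s, t, hs, ht, hst, heq⟩
    have h1 := congrArg Prod.fst heq
    have h2 := congrArg Prod.snd heq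
    simp only [Prod.fst_add, Prod.snd_add, Prod.smul_fst, Prod.smul_snd, smul_eq_mul,
      toR2] at h1 h2
    have hs' : s = 1 - t := by linarith
    subst hs'
    constructor
    · nlinarith
    constructor
    · nlinarith
    · nlinarith
  · rintro ⟨h2, hl, hr⟩
    refine ⟨1 - (x.1 - u.1), x.1 - u.1, by linarith, by linarith, by ring, ?_⟩
    have : x = (x.1, x.2) := rfl
    rw [this, h2]
    simp only [toR2, Prod.ext_iff, Prod.fst_add, Prod.snd_add, Prod.smul_fst,
      Prod.smul_snd, smul_eq_mul]
    constructor <;> ring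

lemma mem_seg_vert {u : V} {x : ℝ × ℝ} :
    x ∈ segment ℝ (toR2 u) (toR2 (u + dirStep false)) ↔
      x.1 = (u.1 : ℝ) ∧ (u.2 : ℝ) ≤ x.2 ∧ x.2 ≤ (u.2 : ℝ) + 1 := by
  rw [toR2_add_v]
  constructor
  · rintro ⟨s, t, hs, ht, hst, heq⟩
    have h1 := congrArg Prod.fst heq
    have h2 := congrArg Prod.snd heq
    simp only [Prod.fst_add, Prod.snd_add, Prod.smul_fst, Prod.smul_snd, smul_eq_mul,
      toR2] at h1 h2
    have hs' : s = 1 - t := by linarith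
    subst hs'
    exact ⟨by nlinarith, by nlinarith, by nlinarith⟩
  · rintro ⟨h1, hl, hr⟩
    refine ⟨1 - (x.2 - u.2), x.2 - u.2, by linarith, by linarith, by ring, ?_⟩
    have : x = (x.1, x.2) := rfl
    rw [this, h1]
    simp only [toR2, Prod.ext_iff, Prod.fst_add, Prod.snd_add, Prod.smul_fst,
      Prod.smul_snd, smul_eq_mul]
    constructor <;> ring

lemma lattice_on_seg {u p : V} {d : Bool}
    (h : toR2 p ∈ segment ℝ (toR2 u) (toR2 (u + dirStep d))) : p = u ∨ p = u + dirStep d := by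
  cases d
  · rw [mem_seg_vert] at h
    obtain ⟨h1, hl, hr⟩ := h
    simp only [toR2] at h1 hl hr
    have e1 : p.1 = u.1 := by exact_mod_cast h1
    have e2 : u.2 ≤ p.2 := by exact_mod_cast hl
    have e3 : p.2 ≤ u.2 + 1 := by exact_mod_cast hr
    simp only [Prod.ext_iff, dirStep, Prod.fst_add, Prod.snd_add]
    omega
  · rw [mem_seg_horiz] at h
    obtain ⟨h1, hl, hr⟩ := h
    simp only [toR2] at h1 hl hr
    have e1 : p.2 = u.2 := by exact_mod_cast h1
    have e2 : u.1 ≤ p.1 := by exact_mod_cast hl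
    have e3 : p.1 ≤ u.1 + 1 := by exact_mod_cast hr
    simp only [Prod.ext_iff, dirStep, Prod.fst_add, Prod.snd_add]
    omega

lemma seg_intersect {u u' : V} {d d' : Bool} {x : ℝ × ℝ}
    (h : x ∈ segment ℝ (toR2 u) (toR2 (u + dirStep d)))
    (h' : x ∈ segment ℝ (toR2 u') (toR2 (u' + dirStep d'))) :
    u = u' ∨ u = u' + dirStep d' ∨ u + dirStep d = u' ∨ u + dirStep d = u' + dirStep d' := by
  simp only [Prod.ext_iff, dirStep, Prod.fst_add, Prod.snd_add]
  cases d <;> cases d'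
  · -- vert, vert
    rw [mem_seg_vert] at h h'
    have e1 : u.1 = u'.1 := by exact_mod_cast h.1.symm.trans h'.1
    have e2 : (u.2 : ℝ) ≤ (u'.2 : ℝ) + 1 := by linarith [h.2.1, h'.2.2]
    have e3 : (u'.2 : ℝ) ≤ (u.2 : ℝ) + 1 := by linarith [h.2.2, h'.2.1]
    have i2 : u.2 ≤ u'.2 + 1 := by exact_mod_cast e2
    have i3 : u'.2 ≤ u.2 + 1 := by exact_mod_cast e3
    simp only [dirStep]
    omega
  · -- vert, horiz
    rw [mem_seg_vert] at h
    rw [mem_seg_horiz] at h'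
    have e1 : (u'.1 : ℝ) ≤ (u.1 : ℝ) := by linarith [h.1, h'.2.1]
    have e2 : (u.1 : ℝ) ≤ (u'.1 : ℝ) + 1 := by linarith [h.1, h'.2.2]
    have e3 : (u.2 : ℝ) ≤ (u'.2 : ℝ) := by linarith [h.2.1, h'.1]
    have e4 : (u'.2 : ℝ) ≤ (u.2 : ℝ) + 1 := by linarith [h.2.2, h'.1]
    have i1 : u'.1 ≤ u.1 := by exact_mod_cast e1
    have i2 : u.1 ≤ u'.1 + 1 := by exact_mod_cast e2
    have i3 : u.2 ≤ u'.2 := by exact_mod_cast e3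
    have i4 : u'.2 ≤ u.2 + 1 := by exact_mod_cast e4
    simp only [dirStep]
    omega
  · -- horiz, vert
    rw [mem_seg_horiz] at h
    rw [mem_seg_vert] at h'
    have e1 : (u.1 : ℝ) ≤ (u'.1 : ℝ) := by linarith [h.2.1, h'.1]
    have e2 : (u'.1 : ℝ) ≤ (u.1 : ℝ) + 1 := by linarith [h.2.2, h'.1]
    have e3 : (u'.2 : ℝ) ≤ (u.2 : ℝ) := by linarith [h.1, h'.2.1]
    have e4 : (u.2 : ℝ) ≤ (u'.2 : ℝ) + 1 := by linarith [h.1, h'.2.2]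
    have i1 : u.1 ≤ u'.1 := by exact_mod_cast e1
    have i2 : u'.1 ≤ u.1 + 1 := by exact_mod_cast e2
    have i3 : u'.2 ≤ u.2 := by exact_mod_cast e3
    have i4 : u.2 ≤ u'.2 + 1 := by exact_mod_cast e4
    simp only [dirStep]
    omega
  · -- horiz, horiz
    rw [mem_seg_horiz] at h h'
    have e1 : u.2 = u'.2 := by exact_mod_cast h.1.symm.trans h'.1
    have e2 : (u.1 : ℝ) ≤ (u'.1 : ℝ) + 1 := by linarith [h.2.1, h'.2.2]
    have e3 : (u'.1 : ℝ) ≤ (u.1 : ℝ) + 1 := by linarith [h.2.2, h'.2.1]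
    have i2 : u.1 ≤ u'.1 + 1 := by exact_mod_cast e2
    have i3 : u'.1 ≤ u.1 + 1 := by exact_mod_cast e3
    simp only [dirStep]
    omega

lemma adj_normalize {p q : V} (h : Adj p q) :
    ∃ (b : V) (d : Bool), (p = b ∧ q = b + dirStep d) ∨ (p = b + dirStep d ∧ q = b) := by
  rcases h with h | h | h | h
  · exact ⟨p, true, Or.inl ⟨rfl, h⟩⟩
  · exact ⟨p, false, Or.inl ⟨rfl, h⟩⟩
  · exact ⟨q, true, Or.inr ⟨h, rfl⟩⟩
  · exact ⟨q, false, Or.inr ⟨h, rfl⟩⟩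

lemma adj_segment_eq {p q : V} (b : V) (d : Bool)
    (h : (p = b ∧ q = b + dirStep d) ∨ (p = b + dirStep d ∧ q = b)) :
    segment ℝ (toR2 p) (toR2 q) = segment ℝ (toR2 b) (toR2 (b + dirStep d)) := by
  rcases h with ⟨rfl, rfl⟩ | ⟨rfl, rfl⟩
  · rfl
  · exact segment_symm ℝ _ _

lemma seg_avoid {p q u w : V} (hpq : Adj p q) (huw : Adj u w)
    (hp1 : p ≠ u) (hp2 : p ≠ w) (hq1 : q ≠ u) (hq2 : q ≠ w) :
    ∀ x ∈ segment ℝ (toR2 p) (toR2 q), x ∉ segment ℝ (toR2 u) (toR2 w) := by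
  intro x hx hx'
  obtain ⟨b, d, hb⟩ := adj_normalize hpq
  obtain ⟨b', d', hb'⟩ := adj_normalize huw
  rw [adj_segment_eq b d hb] at hx
  rw [adj_segment_eq b' d' hb'] at hx'
  have hside : b = b' ∨ b = b' + dirStep d' ∨ b + dirStep d = b' ∨
      b + dirStep d = b' + dirStep d' := seg_intersect hx hx'
  have hbpq : (b = p ∨ b = q) ∧ (b + dirStep d = p ∨ b + dirStep d = q) := by
    rcases hb with ⟨h1, h2⟩ | ⟨h1, h2⟩
    · exact ⟨Or.inl h1.symm, Or.inr h2.symm⟩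
    · exact ⟨Or.inr h2.symm, Or.inl h1.symm⟩
  have hbuw : (b' = u ∨ b' = w) ∧ (b' + dirStep d' = u ∨ b' + dirStep d' = w) := by
    rcases hb' with ⟨h1, h2⟩ | ⟨h1, h2⟩
    · exact ⟨Or.inl h1.symm, Or.inr h2.symm⟩
    · exact ⟨Or.inr h2.symm, Or.inl h1.symm⟩
  rcases hside with h | h | h | h
  · rcases hbpq.1 with h1 | h1 <;> rcases hbuw.1 with h2 | h2 <;>
      rw [h] at h1 <;> rw [h2] at h1 <;> subst h1 <;> first
        | exact hp1 rfl | exact hp2 rfl | exact hq1 rfl | exact hq2 rfl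
  · rcases hbpq.1 with h1 | h1 <;> rcases hbuw.2 with h2 | h2 <;>
      rw [h] at h1 <;> rw [h2] at h1 <;> subst h1 <;> first
        | exact hp1 rfl | exact hp2 rfl | exact hq1 rfl | exact hq2 rfl
  · rcases hbpq.2 with h1 | h1 <;> rcases hbuw.1 with h2 | h2 <;>
      rw [h] at h1 <;> rw [h2] at h1 <;> subst h1 <;> first
        | exact hp1 rfl | exact hp2 rfl | exact hq1 rfl | exact hq2 rfl
  · rcases hbpq.2 with h1 | h1 <;> rcases hbuw.2 with h2 | h2 <;>
      rw [h] at h1 <;> rw [h2] at h1 <;> subst h1 <;> first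
        | exact hp1 rfl | exact hp2 rfl | exact hq1 rfl | exact hq2 rfl

lemma traceFrom_lattice {γ : ℕ → V} (hγ : IsInfPath γ) {a : ℕ} {p : V}
    (h : toR2 p ∈ traceFrom γ a) : p ∈ Set.range γ := by
  obtain ⟨n, hn⟩ := Set.mem_iUnion.mp h
  obtain ⟨b, d, hb⟩ := adj_normalize (hγ (a + n))
  rw [adj_segment_eq b d hb] at hn
  rcases lattice_on_seg hn with h' | h' <;>
    rcases hb with ⟨h1, h2⟩ | ⟨h1, h2⟩ <;> subst h'
  · exact ⟨a + n, h1⟩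
  · exact ⟨a + n + 1, h2⟩
  · exact ⟨a + n + 1, h2⟩
  · exact ⟨a + n, h1⟩

lemma seg_avoid_trace {γ : ℕ → V} (hγ : IsInfPath γ) {a : ℕ} {p q : V} (hpq : Adj p q)
    (hp : p ∉ Set.range γ) (hq : q ∉ Set.range γ) :
    ∀ x ∈ segment ℝ (toR2 p) (toR2 q), x ∉ traceFrom γ a := by
  intro x hx hx'
  obtain ⟨n, hn⟩ := Set.mem_iUnion.mp hx'
  exact seg_avoid hpq (hγ (a + n))
    (fun h => hp ⟨a + n, h.symm⟩) (fun h => hp ⟨a + n + 1, h.symm⟩)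
    (fun h => hq ⟨a + n, h.symm⟩) (fun h => hq ⟨a + n + 1, h.symm⟩) x hx hn

/-- Adjacent lattice points off the two geodesics lie in the same connected component
of the complement of the union of the two traces. -/
lemma comp_step {γ₁ γ₂ : ℕ → V} (hγ1 : IsInfPath γ₁) (hγ2 : IsInfPath γ₂) {a b : ℕ}
    {p q : V} (hpq : Adj p q)
    (hp1 : p ∉ Set.range γ₁) (hp2 : p ∉ Set.range γ₂)
    (hq1 : q ∉ Set.range γ₁) (hq2 : q ∉ Set.range γ₂) :
    connectedComponentIn (traceFrom γ₁ a ∪ traceFrom γ₂ b)ᶜ (toR2 p) =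
      connectedComponentIn (traceFrom γ₁ a ∪ traceFrom γ₂ b)ᶜ (toR2 q) := by
  have hseg : segment ℝ (toR2 p) (toR2 q) ⊆ (traceFrom γ₁ a ∪ traceFrom γ₂ b)ᶜ := by
    intro x hx
    rintro (hx' | hx')
    · exact seg_avoid_trace hγ1 hpq hp1 hq1 x hx hx'
    · exact seg_avoid_trace hγ2 hpq hp2 hq2 x hx hx'
  have hsub := (convex_segment (toR2 p) (toR2 q)).isPreconnected.subset_connectedComponentIn
    (left_mem_segment ℝ _ _) hseg
  exact (connectedComponentIn_eq (hsub (right_mem_segment ℝ _ _)))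

end GeoBetweenAux

/-- **Lemma (`geobetween`).** On `𝒳`, if `g₁ ≺ g₂` eventually move into `H_i` and `U` is the
region between them, then any finite geodesic from `0` containing a vertex strictly inside
`U` stays in `U ∪ g₁ ∪ g₂`, and all its vertices from that point onward lie strictly
inside `U`. -/
theorem finite_geodesic_trapped_in_region (mu : ℝ × ℝ → ℝ) (hmu : IsNorm2 mu)
    (C : Set (ℝ × ℝ)) (hCcpt : IsCompact C) (hC : ∀ ρ ∈ C, IsSupporting mu ρ)
    (ω : Omega1) (hω : ω ∈ Xevent mu C) (i : ℤ) (γ₁ γ₂ : ℕ → V)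
    (h1 : IsInfGeo ω γ₁) (h10 : γ₁ 0 = 0) (h2 : IsInfGeo ω γ₂) (h20 : γ₂ 0 = 0)
    (hm1 : MovesInto γ₁ (Hp i)) (hm2 : MovesInto γ₂ (Hp i)) (hprec : PrecIn i γ₁ γ₂)
    (U : Set (ℝ × ℝ)) (hU : IsRegionBetween i γ₁ γ₂ U)
    (y : V) (l : List V) (hl : IsGeo ω l 0 y)
    (hz : ∃ p ∈ l, toR2 p ∈ U ∧ p ∉ Set.range γ₁ ∧ p ∉ Set.range γ₂) :
    (∀ p ∈ l, toR2 p ∈ U ∨ p ∈ Set.range γ₁ ∨ p ∈ Set.range γ₂) ∧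
    ∀ (n m : ℕ) (hn : n < l.length) (hm : m < l.length),
      (toR2 (l.get ⟨n, hn⟩) ∈ U ∧ l.get ⟨n, hn⟩ ∉ Set.range γ₁ ∧
        l.get ⟨n, hn⟩ ∉ Set.range γ₂) → n ≤ m →
      toR2 (l.get ⟨m, hm⟩) ∈ U ∧ l.get ⟨m, hm⟩ ∉ Set.range γ₁ ∧
        l.get ⟨m, hm⟩ ∉ Set.range γ₂ := by
  obtain ⟨huniq, hex, -, -, -⟩ := hω
  obtain ⟨a, b, hlast, z0, hz01, hz02, x0, hx0U, hx0sub, hUeq⟩ := hU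
  obtain ⟨z, hzl, hzU, hzr1, hzr2⟩ := hz
  obtain ⟨nz, hnzlt, hnzeq⟩ := List.mem_iff_getElem.mp hzl
  set F := traceFrom γ₁ a ∪ traceFrom γ₂ b with hFdef
  set K := connectedComponentIn Fᶜ x0 with hKdef
  have hchain : l.Chain' Adj := hl.1.2.1
  have hforward : ∀ m (hm : m < l.length), ∀ n, n ≤ m → ∀ (hn : n < l.length),
      (l[m] ∈ Set.range γ₁ ∨ l[m] ∈ Set.range γ₂) →
      l[n] ∈ Set.range γ₁ ∨ l[n] ∈ Set.range γ₂ := by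
    intro m hm n hnm hn hmem
    rcases hmem with ⟨j, hj⟩ | ⟨j, hj⟩
    · exact Or.inl ⟨n, (geo_hit huniq hex h1 h10 hl hm hj.symm n hnm hn).symm⟩
    · exact Or.inr ⟨n, (geo_hit huniq hex h2 h20 hl hm hj.symm n hnm hn).symm⟩
  have hoffF : ∀ p : V, p ∉ Set.range γ₁ → p ∉ Set.range γ₂ → toR2 p ∈ Fᶜ := by
    intro p hp1 hp2 hmem
    rw [hFdef] at hmem
    rcases hmem with h | h
    · exact hp1 (traceFrom_lattice h1.1 h)
    · exact hp2 (traceFrom_lattice h2.1 h)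
  have hcomp : ∀ n (hn : n < l.length), l[n] ∉ Set.range γ₁ → l[n] ∉ Set.range γ₂ →
      ∀ m (hm : m < l.length), n ≤ m →
      connectedComponentIn Fᶜ (toR2 l[n]) = connectedComponentIn Fᶜ (toR2 l[m]) := by
    intro n hn hn1 hn2 m hm hnm
    induction m with
    | zero =>
      have : n = 0 := by omega
      subst this; rfl
    | succ m ih =>
      rcases Nat.lt_or_ge n (m + 1) with hlt | hge
      · have hm' : m < l.length := by omega
        have hnm' : n ≤ m := by omega
        have ihm := ih hm' hnm'
        have hoffm : l[m] ∉ Set.range γ₁ ∧ l[m] ∉ Set.range γ₂ :=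
          not_or.mp (fun h => (hforward m hm' n hnm' hn h).elim hn1 hn2)
        have hoffm1 : l[m + 1] ∉ Set.range γ₁ ∧ l[m + 1] ∉ Set.range γ₂ :=
          not_or.mp (fun h => (hforward (m + 1) hm n (by omega) hn h).elim hn1 hn2)
        have hadj : Adj l[m] l[m + 1] := by
          have := List.isChain_iff_getElem.mp hchain m (by omega)
          simpa [List.get_eq_getElem] using this
        exact ihm.trans
          (comp_step h1.1 h2.1 hadj hoffm.1 hoffm.2 hoffm1.1 hoffm1.2)
      · have : n = m + 1 := by omega
        subst this; rfl
  have hKeq : ∀ p : V, toR2 p ∈ U → p ∉ Set.range γ₁ → p ∉ Set.range γ₂ →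
      connectedComponentIn Fᶜ (toR2 p) = K ∧ toR2 p ∈ K := by
    intro p hpU hp1 hp2
    have hpF : toR2 p ∈ Fᶜ := hoffF p hp1 hp2
    have hpK : toR2 p ∈ K := by
      rw [hUeq] at hpU
      rcases hpU with h | h
      · exact absurd h hpF
      · exact h
    exact ⟨(connectedComponentIn_eq hpK).symm, hpK⟩
  have hmain : ∀ n (hn : n < l.length), ∀ m (hm : m < l.length), n ≤ m →
      toR2 l[n] ∈ U → l[n] ∉ Set.range γ₁ → l[n] ∉ Set.range γ₂ →
      toR2 l[m] ∈ K ∧ l[m] ∉ Set.range γ₁ ∧ l[m] ∉ Set.range γ₂ := by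
    intro n hn m hm hnm hnU hn1 hn2
    have hoffm : l[m] ∉ Set.range γ₁ ∧ l[m] ∉ Set.range γ₂ :=
      not_or.mp (fun h => (hforward m hm n hnm hn h).elim hn1 hn2)
    have hcc := hcomp n hn hn1 hn2 m hm hnm
    have hcK := (hKeq l[n] hnU hn1 hn2).1
    have hmm : toR2 l[m] ∈ connectedComponentIn Fᶜ (toR2 l[m]) :=
      mem_connectedComponentIn (hoffF _ hoffm.1 hoffm.2)
    rw [← hcc, hcK] at hmm
    exact ⟨hmm, hoffm.1, hoffm.2⟩
  constructor
  · intro p hp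
    obtain ⟨n, hn, rfl⟩ := List.mem_iff_getElem.mp hp
    by_cases hr1 : l[n] ∈ Set.range γ₁
    · exact Or.inr (Or.inl hr1)
    by_cases hr2 : l[n] ∈ Set.range γ₂
    · exact Or.inr (Or.inr hr2)
    left
    rcases le_total n nz with h | h
    · have hcc := hcomp n hn hr1 hr2 nz hnzlt h
      have hzK := hKeq z hzU hzr1 hzr2
      have hmm : toR2 l[n] ∈ connectedComponentIn Fᶜ (toR2 l[n]) :=
        mem_connectedComponentIn (hoffF _ hr1 hr2)
      rw [hcc, hnzeq, hzK.1] at hmm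
      rw [hUeq]
      exact Set.mem_union_right _ hmm
    · have hres := hmain nz hnzlt n hn h (by rw [hnzeq]; exact hzU)
        (by rw [hnzeq]; exact hzr1) (by rw [hnzeq]; exact hzr2)
      rw [hUeq]
      exact Set.mem_union_right _ hres.1
  · intro n m hn hm hprop hnm
    simp only [List.get_eq_getElem] at hprop ⊢
    have hres := hmain n hn m hm hnm hprop.1 hprop.2.1 hprop.2.2
    refine ⟨?_, hres.2.1, hres.2.2⟩
    rw [hUeq]
    exact Set.mem_union_right _ hres.1
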